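/- arXiv:1901.07026 — 3 statements merged into one kernel-verified Lean document; each statement's English description precedes it below -/
import Mathlib

section
/- Suppose ⟨ is an Aut(M)-invariant ternary relation on small subsets of a monster model M satisfying strong finite character, existence over models, monotonicity, and symmetry. Then for any model M₀ ≼ M and tuples a, b, if tp(a/M₀b) is finitely satisfiable in M₀ (i.e. a ⫞ᵘ_{M₀} b), then a ⫞_{M₀} b. -/
open FirstOrder Set Cardinal

universe u v w x y

namespace KimPaper

variable {L : FirstOrder.Language.{u, v}} {M : Type w} [L.Structure M]

/-- Realization, at the tuple `a`, of a formula whose parameter variables range over `A`. -/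
def RealizeOver (A : Set M) {γ : Type x} (φ : L.Formula (γ ⊕ ↥A)) (a : γ → M) : Prop :=
  φ.Realize (Sum.elim a (fun p => (p : M)))

/-- `a ≡_A b` : the tuples `a` and `b` have the same type over `A`. -/
def EqTp (A : Set M) {γ : Type x} (a b : γ → M) : Prop :=
  ∀ φ : L.Formula (γ ⊕ ↥A), RealizeOver A φ a ↔ RealizeOver A φ b

/-- The sequence `b` of `γ`-tuples is (order-)indiscernible over `A`. -/
def Indiscernible (A : Set M) {I : Type*} [LinearOrder I] {γ : Type x} (b : I → γ → M) : Prop :=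
  ∀ (n : ℕ) (s t : Fin n → I), StrictMono s → StrictMono t →
    EqTp (L := L) A (fun p : Fin n × γ => b (s p.1) p.2) (fun p : Fin n × γ => b (t p.1) p.2)

/-- `a ⫞ᵘ_A B` : the type of `a` over `A ∪ B` is finitely satisfiable in `A` (coheir). -/
def Coheir (A : Set M) {γ : Type x} (a : γ → M) (B : Set M) : Prop :=
  ∀ φ : L.Formula (γ ⊕ ↥(A ∪ B)), φ.Realize (Sum.elim a Subtype.val) →
    ∃ a' : γ → M, (∀ i, a' i ∈ A) ∧ φ.Realize (Sum.elim a' Subtype.val)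

/-- `a ⫞ʰ_A b` : the type of `a` over `A ∪ b` is an heir of its restriction to `A`. -/
def Heir (A : Set M) {γ : Type x} {δ : Type*} (a : γ → M) (b : δ → M) : Prop :=
  ∀ φ : L.Formula (γ ⊕ (δ ⊕ ↥A)),
    φ.Realize (Sum.elim a (Sum.elim b Subtype.val)) →
    ∃ b' : δ → M, (∀ i, b' i ∈ A) ∧ φ.Realize (Sum.elim a (Sum.elim b' Subtype.val))

/-- A complete global type (over the monster `M`) in variables indexed by `γ`.
Formulas with parameters in `M` are represented as formulas with variables `γ ⊕ M`,
the `M`-indexed variables being assigned to themselves. -/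
structure GlobalType (L : FirstOrder.Language.{u, v}) (M : Type w) [L.Structure M] (γ : Type x) where
  Mem : L.Formula (γ ⊕ M) → Prop
  mem_not : ∀ φ : L.Formula (γ ⊕ M), Mem φ.not ↔ ¬ Mem φ
  mem_inf : ∀ φ ψ : L.Formula (γ ⊕ M), Mem φ → Mem ψ → Mem (φ ⊓ ψ)
  mem_sat : ∀ φ : L.Formula (γ ⊕ M), Mem φ → ∃ a : γ → M, φ.Realize (Sum.elim a id)

/-- The global type `q` is invariant over `A`. -/
def GlobalType.Invariant {γ : Type x} (q : GlobalType L M γ) (A : Set M) : Prop :=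
  ∀ (n : ℕ) (f g : Fin n → M) (φ : L.Formula (γ ⊕ Fin n)),
    EqTp (L := L) A f g →
    (q.Mem (φ.relabel (Sum.map id f)) ↔ q.Mem (φ.relabel (Sum.map id g)))

/-- The global type `q` extends `tp(b/A)`. -/
def GlobalType.ExtendsTp {γ : Type x} (q : GlobalType L M γ) (A : Set M) (b : γ → M) : Prop :=
  ∀ φ : L.Formula (γ ⊕ ↥A), RealizeOver A φ b → q.Mem (φ.relabel (Sum.map id Subtype.val))

/-- The global type `q` is finitely satisfiable in `A`. -/
def GlobalType.FinSatIn {γ : Type x} (q : GlobalType L M γ) (A : Set M) : Prop :=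
  ∀ φ : L.Formula (γ ⊕ M), q.Mem φ → ∃ a : γ → M, (∀ i, a i ∈ A) ∧ φ.Realize (Sum.elim a id)

/-- `b` realizes the restriction `q ↾ B` of the global type `q` to the parameter set `B`. -/
def GlobalType.RealizesRestrictedTo {γ : Type x} (q : GlobalType L M γ) (B : Set M)
    (b : γ → M) : Prop :=
  ∀ φ : L.Formula (γ ⊕ ↥B), q.Mem (φ.relabel (Sum.map id Subtype.val)) → RealizeOver B φ b

/-- `b` is a Morley sequence in the global type `q` over `A` (indexed by a linear order `I`):
each `b i` realizes the restriction of `q` to `A ∪ {b j : j < i}`. -/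
def IsMorleyIn {γ : Type x} (q : GlobalType L M γ) (A : Set M) {I : Type*} [LinearOrder I]
    (b : I → γ → M) : Prop :=
  ∀ i : I, q.RealizesRestrictedTo (A ∪ ⋃ j ∈ {j : I | j < i}, Set.range (b j)) (b i)

/-- The family `{φ(x ; b i) : i < ω}` is inconsistent. -/
def Inconsistent {γ : Type x} {δ : Type*} (φ : L.Formula (γ ⊕ δ)) (b : ℕ → δ → M) : Prop :=
  ∃ s : Finset ℕ, ¬ ∃ a : γ → M, ∀ i ∈ s, φ.Realize (Sum.elim a (b i))

/-- The family `{φ(x ; b i) : i < ω}` is `k`-inconsistent. -/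
def KInconsistent {γ : Type x} {δ : Type*} (φ : L.Formula (γ ⊕ δ)) (b : ℕ → δ → M)
    (k : ℕ) : Prop :=
  ∀ s : Finset ℕ, s.card = k → ¬ ∃ a : γ → M, ∀ i ∈ s, φ.Realize (Sum.elim a (b i))

/-- `φ(x;b)` Kim-divides over `A`: the instances of `φ` along some Morley sequence in some
global `A`-invariant type extending `tp(b/A)` are inconsistent. -/
def KimDivides (A : Set M) {γ : Type x} {δ : Type*} (φ : L.Formula (γ ⊕ δ)) (b : δ → M) : Prop :=
  ∃ q : GlobalType L M δ, q.Invariant A ∧ q.ExtendsTp A b ∧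
    ∃ bs : ℕ → δ → M, IsMorleyIn q A bs ∧ Inconsistent φ bs

/-- `ψ(x)` (a formula with parameters in `M`, coded via variables `γ ⊕ M`) Kim-forks over `A`:
it implies a finite disjunction of formulas, each Kim-dividing over `A`. -/
def KimForks (A : Set M) {γ : Type x} (ψ : L.Formula (γ ⊕ M)) : Prop :=
  ∃ (n : ℕ) (Φ : Fin n → L.Formula (γ ⊕ M)),
    (∀ j, KimDivides A (Φ j) (id : M → M)) ∧
    ∀ a : γ → M, ψ.Realize (Sum.elim a id) → ∃ j, (Φ j).Realize (Sum.elim a id)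

/-- `a ⫞ᴷ_A b` : `tp(a / A b)` does not Kim-fork over `A`. -/
def KimIndep (A : Set M) {γ : Type x} {δ : Type*} (a : γ → M) (b : δ → M) : Prop :=
  ∀ φ : L.Formula (γ ⊕ (δ ⊕ ↥A)),
    φ.Realize (Sum.elim a (Sum.elim b Subtype.val)) →
    ¬ KimForks A (φ.relabel (Sum.map id (Sum.elim b Subtype.val)))

/-- An `⫞ᴷ`-Morley sequence over `A`: an `A`-indiscernible sequence with `bᵢ ⫞ᴷ_A b₍₋ᵢ₎`. -/
def KimMorley (A : Set M) {δ : Type*} (b : ℕ → δ → M) : Prop :=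
  Indiscernible (L := L) A b ∧
    ∀ i : ℕ, KimIndep (L := L) A (b i) (fun p : Fin i × δ => b p.1 p.2)

/-- A total `⫞ᴷ`-Morley sequence over `A`: `A`-indiscernible with `b₍₊ᵢ₎ ⫞ᴷ_A b₍≤ᵢ₎`. -/
def TotalKimMorley (A : Set M) {δ : Type*} (b : ℕ → δ → M) : Prop :=
  Indiscernible (L := L) A b ∧
    ∀ i : ℕ, KimIndep (L := L) A (fun p : {j : ℕ // i < j} × δ => b p.1 p.2)
      (fun p : {j : ℕ // j ≤ i} × δ => b p.1 p.2)

/-- The sequence `b` is a witness for Kim-dividing over `A` : every formula (with parameters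
in `A`) Kim-dividing at `b 0` is inconsistent along the sequence. -/
def WitnessSeq (A : Set M) {δ : Type*} (b : ℕ → δ → M) : Prop :=
  ∀ (n : ℕ) (φ : L.Formula (Fin n ⊕ (δ ⊕ ↥A))),
    KimDivides A φ (Sum.elim (b 0) Subtype.val) →
    ∃ s : Finset ℕ, ¬ ∃ a : Fin n → M, ∀ i ∈ s,
      φ.Realize (Sum.elim a (Sum.elim (b i) Subtype.val))

/-- A strong witness for Kim-dividing over `A`: every sequence of consecutive `k`-blocks
is a witness for Kim-dividing over `A`. -/
def StrongWitnessSeq (A : Set M) {δ : Type*} (b : ℕ → δ → M) : Prop :=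
  ∀ k : ℕ, 0 < k → WitnessSeq (L := L) A (fun i (p : Fin k × δ) => b (k * i + p.1) p.2)

/-- `φ(x;a)` `k`-Kim-divides over `A` : some `⫞ᴷ`-Morley sequence over `A` starting with `a`
makes `{φ(x;aᵢ)}` `k`-inconsistent. -/
def KKimDivides (A : Set M) {γ : Type x} {δ : Type*} (φ : L.Formula (γ ⊕ δ)) (a : δ → M)
    (k : ℕ) : Prop :=
  ∃ as : ℕ → δ → M, as 0 = a ∧ KimMorley (L := L) A as ∧ KInconsistent φ as k

/-- The formula `φ(x;y)` has SOP₁ (in `M`). -/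
def FormulaSOP1 {n m : ℕ} (φ : L.Formula (Fin n ⊕ Fin m)) (M : Type w) [L.Structure M] : Prop :=
  ∃ t : List Bool → Fin m → M,
    (∀ f : ℕ → Bool, ∀ N : ℕ, ∃ a : Fin n → M, ∀ k ≤ N,
        φ.Realize (Sum.elim a (t (List.ofFn (fun i : Fin k => f i))))) ∧
    (∀ ν η : List Bool, ν ++ [false] <+: η →
      ¬ ∃ a : Fin n → M, φ.Realize (Sum.elim a (t η)) ∧
        φ.Realize (Sum.elim a (t (ν ++ [true]))))

/-- `T = Th(M)` has SOP₁. -/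
def HasSOP1 (L : FirstOrder.Language.{u, v}) (M : Type w) [L.Structure M] : Prop :=
  ∃ (n m : ℕ) (φ : L.Formula (Fin n ⊕ Fin m)), FormulaSOP1 φ M

/-- `T = Th(M)` is NSOP₁. -/
def NSOP1 (L : FirstOrder.Language.{u, v}) (M : Type w) [L.Structure M] : Prop := ¬ HasSOP1 L M

/-- `M` is `κ`-saturated: every type in `< κ` variables over a parameter set of size `< κ`
which is finitely satisfiable in `M` is realized in `M`. -/
def IsSaturatedIn (L : FirstOrder.Language.{u, v}) (M : Type w) [L.Structure M] (κ : Cardinal.{w}) : Prop :=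
  ∀ (γ : Type w) (A : Set M), #γ < κ → #A < κ →
    ∀ Sig : Set (L.Formula (γ ⊕ ↥A)),
      (∀ s : Finset (L.Formula (γ ⊕ ↥A)), ↑s ⊆ Sig →
        ∃ a : γ → M, ∀ φ ∈ s, φ.Realize (Sum.elim a Subtype.val)) →
      ∃ a : γ → M, ∀ φ ∈ Sig, φ.Realize (Sum.elim a Subtype.val)

/-- `a` is a `D`-average of the sequences `bs i` over the parameter set `A`. -/
def IsAverage {I : Type*} (D : Ultrafilter I) (A : Set M) {δ : Type*}
    (bs : I → ℕ → δ → M) (a : ℕ → δ → M) : Prop :=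
  ∀ (n : ℕ) (φ : L.Formula ((Fin n × δ) ⊕ ↥A)),
    (φ.Realize (Sum.elim (fun p : Fin n × δ => a p.1 p.2) Subtype.val) ↔
      {i : I | φ.Realize (Sum.elim (fun p : Fin n × δ => bs i p.1 p.2) Subtype.val)} ∈ D)

variable {L : FirstOrder.Language.{u, v}} {M : Type w} [L.Structure M]


/-- an invariant independence relation with strong finite character,
existence over models, monotonicity and symmetry is implied by coheir independence. -/
theorem coheir_implies_indep
    (R : Set M → Set M → Set M → Prop)
    -- Aut(M)-invariance
    (hinv : ∀ (σ : M ≃[L] M) (A B C : Set M), R A B C → R (σ '' A) (σ '' B) (σ '' C))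
    -- strong finite character
    (hsfc : ∀ (S : L.ElementarySubstructure M) (γ δ : Type w) (a : γ → M) (b : δ → M),
      ¬ R (Set.range a) (Set.range b) ↑S →
      ∃ φ : L.Formula (γ ⊕ (δ ⊕ ↥(S : Set M))),
        φ.Realize (Sum.elim a (Sum.elim b Subtype.val)) ∧
        ∀ a' : γ → M, φ.Realize (Sum.elim a' (Sum.elim b Subtype.val)) →
          ¬ R (Set.range a') (Set.range b) ↑S)
    -- existence over models
    (hex : ∀ (S : L.ElementarySubstructure M) (A : Set M), R A ↑S ↑S)
    -- monotonicity
    (hmono : ∀ (S : L.ElementarySubstructure M) (A A' B B' : Set M),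
      A ⊆ A' → B ⊆ B' → R A' B' ↑S → R A B ↑S)
    -- symmetry
    (hsym : ∀ (S : L.ElementarySubstructure M) (A B : Set M), R A B ↑S → R B A ↑S)
    (S : L.ElementarySubstructure M) {γ δ : Type w} (a : γ → M) (b : δ → M)
    (hu : Coheir (L := L) (S : Set M) a (Set.range b)) :
    R (Set.range a) (Set.range b) ↑S := by
  by_contra h
  obtain ⟨φ, hφ, hbad⟩ := hsfc S γ δ a b h
  set f : δ ⊕ ↥(S : Set M) → ↥((S : Set M) ∪ Set.range b) :=
    Sum.elim (fun i => ⟨b i, Or.inr ⟨i, rfl⟩⟩) (fun s => ⟨s.1, Or.inl s.2⟩) with hf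
  have key : ∀ c : γ → M,
      (φ.relabel (Sum.map id f)).Realize (Sum.elim c Subtype.val) ↔
      φ.Realize (Sum.elim c (Sum.elim b Subtype.val)) := by
    intro c
    rw [FirstOrder.Language.Formula.realize_relabel]
    apply iff_of_eq; congr 1
    funext x
    rcases x with x | x
    · rfl
    · rcases x with i | s <;> rfl
  obtain ⟨a', ha'S, ha'⟩ := hu (φ.relabel (Sum.map id f)) ((key a).2 hφ)
  refine hbad a' ((key a').1 ha') ?_
  refine hsym S _ _ (hmono S (Set.range b) (Set.range b) (Set.range a') (↑S)
    subset_rfl ?_ (hex S (Set.range b)))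
  rintro _ ⟨i, rfl⟩
  exact ha'S i

end KimPaper
end

section
/- With notation as in the previous setting: suppose ⟨M_i : i ≤ α⟩ is an increasing continuous elementary chain, for each i < α the sequence b̄_i = ⟨b_{i,j} : j < ω⟩ is an indiscernible heir sequence over M_i, and b_{i,0} ≡_{M_i} b_{j,0} for all i ≤ j. Let D be an ultrafilter on α concentrating on end segments and let ā = ⟨a_j : j < ω⟩ realize the D-average of ⟨b̄_i : i < α⟩ over M_α. Then ā is an indiscernible heir sequence over M_α and a₀ ≡_{M_i} b_{i,0} for every i < α. -/
open FirstOrder Set Cardinal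

universe u v w x y

namespace KimPaper

variable {L : FirstOrder.Language.{u, v}} {M : Type w} [L.Structure M]

variable {L : FirstOrder.Language.{u, v}} {M : Type w} [L.Structure M]


section Auxiliary

lemma realizeOver_lift {B C : Set M} (h : B ⊆ C) {γ : Type x} (φ : L.Formula (γ ⊕ ↥B))
    (c : γ → M) :
    RealizeOver C (φ.relabel (Sum.map id (Set.inclusion h))) c ↔ RealizeOver B φ c := by
  unfold RealizeOver
  rw [Language.Formula.realize_relabel]
  have hcomp : (Sum.elim c (fun p : ↥C => (p : M))) ∘ (Sum.map id (Set.inclusion h))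
      = Sum.elim c (fun p : ↥B => (p : M)) := by
    funext x; rcases x with g | p <;> rfl
  rw [hcomp]

lemma EqTp.mono {B C : Set M} (h : B ⊆ C) {γ : Type x} {x y : γ → M}
    (H : EqTp (L := L) C x y) : EqTp (L := L) B x y := by
  intro φ
  rw [← realizeOver_lift h φ x, ← realizeOver_lift h φ y]
  exact H _

lemma exists_localization {ι : Type y} [Nonempty ι] [LinearOrder ι]
    (Mc : ι → L.ElementarySubstructure M)
    (hmono : Monotone fun i => (Mc i : Set M))
    (Mtop : L.ElementarySubstructure M)
    (htop : (Mtop : Set M) = ⋃ i, (Mc i : Set M))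
    {γ : Type x} (φ : L.Formula (γ ⊕ ↥(Mtop : Set M))) :
    ∃ (i₀ : ι) (ψ : L.Formula (γ ⊕ ↥(Mc i₀ : Set M))),
      ∀ c : γ → M, RealizeOver (Mtop : Set M) φ c ↔ RealizeOver (Mc i₀ : Set M) ψ c := by
  classical
  have hex : ∀ p : ↥(Mtop : Set M), ∃ i, (p : M) ∈ (Mc i : Set M) := by
    intro p
    have hp : (p : M) ∈ (Mtop : Set M) := p.2
    exact Set.mem_iUnion.mp (htop.subset hp)
  choose pick hpick using hex
  obtain ⟨i₀, hi₀⟩ := Finset.exists_le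
    (φ.freeVarFinset.image (Sum.elim (fun _ => Classical.arbitrary ι) pick))
  have hmem : ∀ p : ↥(Mtop : Set M), Sum.inr p ∈ φ.freeVarFinset →
      (p : M) ∈ (Mc i₀ : Set M) := by
    intro p hp
    have hle : pick p ≤ i₀ := hi₀ _ (Finset.mem_image_of_mem _ hp)
    exact hmono hle (hpick p)
  have hself : (↑φ.freeVarFinset : Set (γ ⊕ ↥(Mtop : Set M))) ⊆ ↑φ.freeVarFinset :=
    Set.Subset.rfl
  let φ' := φ.restrictFreeVar (Set.inclusion hself)
  let g : ↥(↑φ.freeVarFinset : Set (γ ⊕ ↥(Mtop : Set M))) → γ ⊕ ↥(Mc i₀ : Set M) := fun x =>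
    match x with
    | ⟨Sum.inl c, _⟩ => Sum.inl c
    | ⟨Sum.inr p, hp⟩ => Sum.inr ⟨(p : M), hmem p hp⟩
  refine ⟨i₀, Language.Formula.relabel g φ', fun c => ?_⟩
  unfold RealizeOver
  rw [Language.Formula.realize_relabel]
  have hcomp : (Sum.elim c (fun p : ↥(Mc i₀ : Set M) => (p : M))) ∘ g
      = (Sum.elim c (fun p : ↥(Mtop : Set M) => (p : M))) ∘ (↑) := by
    funext x
    rcases x with ⟨y, hy⟩
    rcases y with c' | p <;> rfl
  rw [hcomp]
  exact (Language.BoundedFormula.realize_restrictFreeVar' hself).symm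

end Auxiliary

/-- a `D`-average of indiscernible heir sequences over an increasing continuous
elementary chain is an indiscernible heir sequence over the union, preserving the type
of the first element over each `M_i`. -/
theorem average_of_heir_sequences (α : Ordinal.{y}) (D : Ultrafilter α.ToType)
    (hD : ∀ i : α.ToType, {j : α.ToType | i ≤ j} ∈ D)
    (Mc : α.ToType → L.ElementarySubstructure M)
    (hmono : Monotone fun i => (Mc i : Set M))
    (Mtop : L.ElementarySubstructure M)
    (htop : (Mtop : Set M) = ⋃ i, (Mc i : Set M))
    {δ : Type w} (bs : α.ToType → ℕ → δ → M)
    (hindisc : ∀ i, Indiscernible (L := L) (Mc i : Set M) (bs i))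
    (hheir : ∀ (i : α.ToType) (j : ℕ), Heir (L := L) (Mc i : Set M) (bs i j)
      (fun p : Fin j × δ => bs i p.1.val p.2))
    (hsame : ∀ i j : α.ToType, i ≤ j → EqTp (L := L) (Mc i : Set M) (bs i 0) (bs j 0))
    (a : ℕ → δ → M) (havg : IsAverage (L := L) D (Mtop : Set M) bs a) :
    Indiscernible (L := L) (Mtop : Set M) a ∧
    (∀ j : ℕ, Heir (L := L) (Mtop : Set M) (a j) (fun p : Fin j × δ => a p.1.val p.2)) ∧
    ∀ i : α.ToType, EqTp (L := L) (Mc i : Set M) (a 0) (bs i 0) := by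
  classical
  have hne : Nonempty α.ToType := by
    obtain ⟨x, -⟩ := D.nonempty_of_mem Filter.univ_mem
    exact ⟨x⟩
  have hsub : ∀ i : α.ToType, (Mc i : Set M) ⊆ (Mtop : Set M) := by
    intro i
    rw [htop]
    exact Set.subset_iUnion (fun i => (Mc i : Set M)) i
  have smono1 : ∀ u : Fin 1 → ℕ, StrictMono u := by
    intro u x y hxy
    exfalso
    have hx := x.2
    have hy := y.2
    rw [Fin.lt_def] at hxy
    omega
  -- averages along arbitrary index maps
  have hrep : ∀ (n : ℕ) (u : Fin n → ℕ) (φ : L.Formula ((Fin n × δ) ⊕ ↥(Mtop : Set M))),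
      (RealizeOver (Mtop : Set M) φ (fun p => a (u p.1) p.2) ↔
        {i | RealizeOver (Mtop : Set M) φ (fun p => bs i (u p.1) p.2)} ∈ D) := by
    intro n u φ
    have hu : ∀ k : Fin n, u k < (Finset.univ.sup u) + 1 :=
      fun k => Nat.lt_succ_of_le (Finset.le_sup (Finset.mem_univ k))
    set N := (Finset.univ.sup u) + 1 with hNdef
    let r : (Fin n × δ) → (Fin N × δ) := fun p => (⟨u p.1, hu p.1⟩, p.2)
    have comp : ∀ c : ℕ → δ → M,
        (Sum.elim (fun p : Fin N × δ => c p.1 p.2) (Subtype.val : ↥(Mtop : Set M) → M))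
          ∘ (Sum.map r id)
        = Sum.elim (fun p : Fin n × δ => c (u p.1) p.2) Subtype.val := by
      intro c; funext x; rcases x with ⟨k, d⟩ | p <;> rfl
    have key := havg N (φ.relabel (Sum.map r id))
    rw [Language.Formula.realize_relabel, comp a] at key
    have hset : {i | Language.Formula.Realize (φ.relabel (Sum.map r id))
          (Sum.elim (fun p : Fin N × δ => bs i p.1 p.2) Subtype.val)}
        = {i | RealizeOver (Mtop : Set M) φ (fun p => bs i (u p.1) p.2)} := by
      ext i
      simp only [Set.mem_setOf_eq, Language.Formula.realize_relabel, comp (bs i)]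
      rfl
    rw [hset] at key
    exact key
  -- compatibility of one-variable-block relabelings
  have comp1 : ∀ (B : Set M) (θ' : L.Formula (δ ⊕ ↥B)) (c : δ → M),
      RealizeOver B (θ'.relabel (Sum.map (fun d => ((0 : Fin 1), d)) id))
          (fun p : Fin 1 × δ => c p.2)
        ↔ RealizeOver B θ' c := by
    intro B θ' c
    unfold RealizeOver
    rw [Language.Formula.realize_relabel]
    have hcomp : (Sum.elim (fun p : Fin 1 × δ => c p.2) (fun p : ↥B => (p : M)))
        ∘ (Sum.map (fun d => ((0 : Fin 1), d)) id)
        = Sum.elim c (fun p : ↥B => (p : M)) := by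
      funext x; rcases x with d | p <;> rfl
    rw [hcomp]
  -- single-index averages
  have havg1 : ∀ (j : ℕ) (θ : L.Formula (δ ⊕ ↥(Mtop : Set M))),
      (RealizeOver (Mtop : Set M) θ (a j) ↔
        {i | RealizeOver (Mtop : Set M) θ (bs i j)} ∈ D) := by
    intro j θ
    have key := hrep 1 (fun _ => j) (θ.relabel (Sum.map (fun d => ((0 : Fin 1), d)) id))
    have hset : {i | RealizeOver (Mtop : Set M)
          (θ.relabel (Sum.map (fun d => ((0 : Fin 1), d)) id))
          (fun p : Fin 1 × δ => bs i ((fun _ : Fin 1 => j) p.1) p.2)}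
        = {i | RealizeOver (Mtop : Set M) θ (bs i j)} := by
      ext i
      exact comp1 _ θ (bs i j)
    rw [hset] at key
    exact (comp1 _ θ (a j)).symm.trans key
  -- transfer along the chain
  have htrans : ∀ (i i' : α.ToType), i ≤ i' → ∀ (j : ℕ)
      (θ : L.Formula (δ ⊕ ↥(Mc i : Set M))),
      (RealizeOver (Mc i : Set M) θ (bs i j) ↔ RealizeOver (Mc i : Set M) θ (bs i' j)) := by
    intro i i' hii' j θ
    have e1 := hindisc i 1 (fun _ => j) (fun _ => 0) (smono1 _) (smono1 _)
      (θ.relabel (Sum.map (fun d => ((0 : Fin 1), d)) id))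
    have e3 := (EqTp.mono (hmono hii')
        (hindisc i' 1 (fun _ => 0) (fun _ => j) (smono1 _) (smono1 _)))
      (θ.relabel (Sum.map (fun d => ((0 : Fin 1), d)) id))
    have step1 : RealizeOver (Mc i : Set M) θ (bs i j) ↔
        RealizeOver (Mc i : Set M) θ (bs i 0) :=
      ((comp1 _ θ (bs i j)).symm.trans e1).trans (comp1 _ θ (bs i 0))
    have step2 := hsame i i' hii' θ
    have step3 : RealizeOver (Mc i : Set M) θ (bs i' 0) ↔
        RealizeOver (Mc i : Set M) θ (bs i' j) :=
      ((comp1 _ θ (bs i' 0)).symm.trans e3).trans (comp1 _ θ (bs i' j))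
    exact (step1.trans step2).trans step3
  -- the key lemma : over `Mc i`, `a j` and `bs i j` have the same type
  have hkey : ∀ (i : α.ToType) (j : ℕ) (θ : L.Formula (δ ⊕ ↥(Mc i : Set M))),
      RealizeOver (Mc i : Set M) θ (a j) ↔ RealizeOver (Mc i : Set M) θ (bs i j) := by
    intro i j θ
    have h1 := havg1 j (θ.relabel (Sum.map id (Set.inclusion (hsub i))))
    rw [realizeOver_lift (hsub i) θ (a j)] at h1
    have hsetiff : ∀ i', RealizeOver (Mtop : Set M)
        (θ.relabel (Sum.map id (Set.inclusion (hsub i)))) (bs i' j) ↔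
        RealizeOver (Mc i : Set M) θ (bs i' j) := fun i' => realizeOver_lift (hsub i) θ (bs i' j)
    constructor
    · intro h
      obtain ⟨i', hi'⟩ := D.nonempty_of_mem (Filter.inter_mem (h1.mp h) (hD i))
      exact (htrans i i' hi'.2 j θ).mpr ((hsetiff i').mp hi'.1)
    · intro h
      refine h1.mpr (Filter.mem_of_superset (hD i) ?_)
      intro i' hi'
      exact (hsetiff i').mpr ((htrans i i' hi' j θ).mp h)
  refine ⟨?_, ?_, fun i θ => hkey i 0 θ⟩
  · -- indiscernibility
    intro n s t hs ht φ
    obtain ⟨i₀, Ψ, hΨ⟩ := exists_localization Mc hmono Mtop htop φ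
    have hbs : ∀ i, i₀ ≤ i →
        (RealizeOver (Mtop : Set M) φ (fun p : Fin n × δ => bs i (s p.1) p.2) ↔
         RealizeOver (Mtop : Set M) φ (fun p : Fin n × δ => bs i (t p.1) p.2)) := by
      intro i hi
      rw [hΨ, hΨ, ← realizeOver_lift (hmono hi) Ψ, ← realizeOver_lift (hmono hi) Ψ]
      exact hindisc i n s t hs ht _
    rw [hrep n s φ, hrep n t φ]
    constructor <;> intro h <;>
      refine Filter.mem_of_superset (Filter.inter_mem h (hD i₀)) ?_ <;>
      rintro i ⟨h1, h2⟩
    · exact (hbs i h2).mp h1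
    · exact (hbs i h2).mpr h1
  · -- heir property
    intro j φ hφ
    let m : δ ⊕ ((Fin j × δ) ⊕ ↥(Mtop : Set M)) → (Fin (j + 1) × δ) ⊕ ↥(Mtop : Set M) := fun x =>
      match x with
      | Sum.inl d => Sum.inl (⟨j, Nat.lt_succ_self j⟩, d)
      | Sum.inr (Sum.inl (k, d)) => Sum.inl (⟨k.1, Nat.lt_succ_of_lt k.2⟩, d)
      | Sum.inr (Sum.inr p) => Sum.inr p
    have hΦ : ∀ w : Fin (j + 1) × δ → M,
        RealizeOver (Mtop : Set M) (φ.relabel m) w ↔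
          φ.Realize (Sum.elim (fun d => w (⟨j, Nat.lt_succ_self j⟩, d))
            (Sum.elim (fun p : Fin j × δ => w (⟨p.1.1, Nat.lt_succ_of_lt p.1.2⟩, p.2))
              Subtype.val)) := by
      intro w
      unfold RealizeOver
      rw [Language.Formula.realize_relabel]
      have hcomp : (Sum.elim w (fun p : ↥(Mtop : Set M) => (p : M))) ∘ m
          = Sum.elim (fun d => w (⟨j, Nat.lt_succ_self j⟩, d))
              (Sum.elim (fun p : Fin j × δ => w (⟨p.1.1, Nat.lt_succ_of_lt p.1.2⟩, p.2))
                Subtype.val) := by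
        funext x
        rcases x with d | x
        · rfl
        rcases x with ⟨k, d⟩ | p <;> rfl
      rw [hcomp]
    obtain ⟨i₀, Ψ, hΨ⟩ := exists_localization Mc hmono Mtop htop (φ.relabel m)
    have hS : {i | RealizeOver (Mtop : Set M) (φ.relabel m)
        (fun p : Fin (j + 1) × δ => bs i p.1 p.2)} ∈ D := by
      have := (havg (j + 1) (φ.relabel m)).mp ((hΦ (fun p : Fin (j + 1) × δ => a p.1 p.2)).mpr hφ)
      exact this
    obtain ⟨i, hi⟩ := D.nonempty_of_mem (Filter.inter_mem hS (hD i₀))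
    have hincl : (Mc i₀ : Set M) ⊆ (Mc i : Set M) := hmono hi.2
    let mi : (Fin (j + 1) × δ) ⊕ ↥(Mc i₀ : Set M) → δ ⊕ ((Fin j × δ) ⊕ ↥(Mc i : Set M)) :=
      fun x =>
      match x with
      | Sum.inl (k, d) =>
        if h : (k : ℕ) = j then Sum.inl d
        else Sum.inr (Sum.inl (⟨k.1, lt_of_le_of_ne (Nat.lt_succ_iff.mp k.2) h⟩, d))
      | Sum.inr p => Sum.inr (Sum.inr (Set.inclusion hincl p))
    have hφi : (Ψ.relabel mi).Realize (Sum.elim (bs i j)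
        (Sum.elim (fun p : Fin j × δ => bs i p.1.val p.2) Subtype.val)) := by
      rw [Language.Formula.realize_relabel]
      have hcomp : (Sum.elim (bs i j)
            (Sum.elim (fun p : Fin j × δ => bs i p.1.val p.2) Subtype.val)) ∘ mi
          = Sum.elim (fun p : Fin (j + 1) × δ => bs i p.1 p.2)
              (fun p : ↥(Mc i₀ : Set M) => (p : M)) := by
        funext x
        rcases x with ⟨k, d⟩ | p
        · by_cases h : (k : ℕ) = j
          · show (Sum.elim (bs i j) _) (if h' : (k : ℕ) = j then _ else _) = bs i (k : ℕ) d
            rw [dif_pos h, h]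
            rfl
          · show (Sum.elim (bs i j) _) (if h' : (k : ℕ) = j then _ else _) = bs i (k : ℕ) d
            rw [dif_neg h]
            rfl
        · rfl
      rw [hcomp]
      exact (hΨ (fun p : Fin (j + 1) × δ => bs i p.1 p.2)).mp hi.1
    obtain ⟨b', hb', hb'real⟩ := hheir i j (Ψ.relabel mi) hφi
    let g : (Fin (j + 1) × δ) ⊕ ↥(Mc i₀ : Set M) → δ ⊕ ↥(Mc i : Set M) := fun x =>
      match x with
      | Sum.inl (k, d) =>
        if h : (k : ℕ) = j then Sum.inl d
        else Sum.inr ⟨b' (⟨k.1, lt_of_le_of_ne (Nat.lt_succ_iff.mp k.2) h⟩, d), hb' _⟩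
      | Sum.inr p => Sum.inr (Set.inclusion hincl p)
    have hχbs : RealizeOver (Mc i : Set M) (Ψ.relabel g) (bs i j) := by
      unfold RealizeOver
      rw [Language.Formula.realize_relabel]
      rw [Language.Formula.realize_relabel] at hb'real
      have hcomp : (Sum.elim (bs i j) (fun p : ↥(Mc i : Set M) => (p : M))) ∘ g
          = (Sum.elim (bs i j)
              (Sum.elim b' Subtype.val)) ∘ mi := by
        funext x
        rcases x with ⟨k, d⟩ | p
        · by_cases h : (k : ℕ) = j
          · show (Sum.elim (bs i j) _) (if h' : (k : ℕ) = j then _ else _)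
              = (Sum.elim (bs i j) _) (if h' : (k : ℕ) = j then _ else _)
            rw [dif_pos h, dif_pos h]
            rfl
          · show (Sum.elim (bs i j) _) (if h' : (k : ℕ) = j then _ else _)
              = (Sum.elim (bs i j) _) (if h' : (k : ℕ) = j then _ else _)
            rw [dif_neg h, dif_neg h]
            rfl
        · rfl
      rw [hcomp]
      exact hb'real
    have hχa : RealizeOver (Mc i : Set M) (Ψ.relabel g) (a j) := (hkey i j _).mpr hχbs
    refine ⟨b', fun q => hsub i (hb' q), ?_⟩
    let w : Fin (j + 1) × δ → M := fun q =>
      if h : (q.1 : ℕ) = j then a j q.2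
      else b' (⟨q.1.1, lt_of_le_of_ne (Nat.lt_succ_iff.mp q.1.2) h⟩, q.2)
    have hΨw : RealizeOver (Mc i₀ : Set M) Ψ w := by
      unfold RealizeOver at hχa ⊢
      rw [Language.Formula.realize_relabel] at hχa
      have hcomp : (Sum.elim (a j) (fun p : ↥(Mc i : Set M) => (p : M))) ∘ g
          = Sum.elim w (fun p : ↥(Mc i₀ : Set M) => (p : M)) := by
        funext x
        rcases x with ⟨k, d⟩ | p
        · by_cases h : (k : ℕ) = j
          · show (Sum.elim (a j) _) (if h' : (k : ℕ) = j then _ else _)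
              = if h' : (k : ℕ) = j then _ else _
            rw [dif_pos h, dif_pos h]
            rfl
          · show (Sum.elim (a j) _) (if h' : (k : ℕ) = j then _ else _)
              = if h' : (k : ℕ) = j then _ else _
            rw [dif_neg h, dif_neg h]
            rfl
        · rfl
      rw [hcomp] at hχa
      exact hχa
    have hΦw : RealizeOver (Mtop : Set M) (φ.relabel m) w := (hΨ w).mpr hΨw
    have := (hΦ w).mp hΦw
    have hcomp : (Sum.elim (fun d => w (⟨j, Nat.lt_succ_self j⟩, d))
        (Sum.elim (fun p : Fin j × δ => w (⟨p.1.1, Nat.lt_succ_of_lt p.1.2⟩, p.2))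
          (Subtype.val : ↥(Mtop : Set M) → M)))
        = Sum.elim (a j) (Sum.elim b' Subtype.val) := by
      funext x
      rcases x with d | x
      · show (if h : ((⟨j, Nat.lt_succ_self j⟩ : Fin (j + 1)) : ℕ) = j then _ else _) = a j d
        rw [dif_pos rfl]
      rcases x with ⟨⟨k, hk⟩, d⟩ | p
      · show (if h : ((⟨k, Nat.lt_succ_of_lt hk⟩ : Fin (j + 1)) : ℕ) = j then _ else _)
          = b' (⟨k, hk⟩, d)
        rw [dif_neg (Nat.ne_of_lt hk)]
      · rfl
    rw [hcomp] at this
    exact this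

end KimPaper
end

section
/- Suppose T has SOP₁. Then there is a formula φ(x;y) and an indiscernible sequence ⟨(a_i, c_{i,0}, c_{i,1}) : i < ω⟩ such that: (1) for all i, a_i realizes {φ(x; c_{j,0}) : j ≤ i}; (2) {φ(x; c_{i,1}) : i < ω} is 2-inconsistent; (3) for all i, c_{i,0} ≡_{a_{<i} c_{<i,0} c_{<i,1}} c_{i,1}. -/
open FirstOrder Set Cardinal

universe u v w x y

namespace KimPaper

variable {L : FirstOrder.Language.{u, v}} {M : Type w} [L.Structure M]

variable {L : FirstOrder.Language.{u, v}} {M : Type w} [L.Structure M]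


section SOP1Aux

open FirstOrder.Language Filter

def tripleElim {n m : ℕ} (d : (Fin n → M) × (Fin m → M) × (Fin m → M)) :
    (Fin n ⊕ (Fin m ⊕ Fin m)) → M :=
  Sum.elim d.1 (Sum.elim d.2.1 d.2.2)


theorem ramsey {α : Type*} [Finite α] : ∀ (r : ℕ) (f : (Fin r → ℕ) → α),
    ∃ (g : ℕ → ℕ) (c : α), StrictMono g ∧ ∀ v : Fin r → ℕ, StrictMono v → f (g ∘ v) = c := by
  intro r
  induction r with
  | zero =>
    intro f
    exact ⟨id, f (fun i => i.elim0), strictMono_id, fun v _ => by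
      congr 1; exact Subsingleton.elim _ _⟩
  | succ r ih =>
    intro f
    set U := Filter.hyperfilter ℕ with hU
    have cofin_mem : ∀ {s : Set ℕ}, sᶜ.Finite → s ∈ U := by
      intro s hs
      exact (Filter.hyperfilter_le_cofinite) (Filter.mem_cofinite.2 hs)
    -- limit color
    have hlim : ∀ v : Fin r → ℕ, ∃ c : α, {x : ℕ | f (Fin.snoc v x) = c} ∈ U := by
      intro v
      obtain ⟨c, hc⟩ := Ultrafilter.eq_pure_of_finite (U.map (fun x => f (Fin.snoc v x)))
      refine ⟨c, ?_⟩
      have h1 : ({c} : Set α) ∈ U.map (fun x => f (Fin.snoc v x)) := by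
        rw [hc]; exact Ultrafilter.mem_pure.2 rfl
      have h2 : (fun x => f (Fin.snoc v x)) ⁻¹' {c} ∈ U := h1
      simpa [Set.preimage, Set.mem_singleton_iff] using h2
    choose limc hlimc using hlim
    -- good sets
    set bigSet : List ℕ → Set ℕ := fun L =>
      {x | (∀ y ∈ L, y < x) ∧ ∀ v : Fin r → ℕ, StrictMono v → (∀ i, v i ∈ L) →
        f (Fin.snoc v x) = limc v} with hbigSet
    have hbig : ∀ L : List ℕ, bigSet L ∈ U := by
      intro L
      apply Filter.inter_mem
      · apply cofin_mem
        have : {x : ℕ | ∀ y ∈ L, y < x}ᶜ ⊆ Iic (L.foldr max 0) := by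
          intro x hx
          simp only [mem_compl_iff, mem_setOf_eq, not_forall] at hx
          obtain ⟨y, hyL, hyx⟩ := hx
          have : y ≤ L.foldr max 0 := List.le_max_of_le hyL le_rfl
          exact le_trans (not_lt.1 hyx) this
        exact (Set.finite_Iic _).subset this
      · have hSfin : {v : Fin r → ℕ | StrictMono v ∧ ∀ i, v i ∈ L}.Finite := by
          apply Set.Finite.subset (Set.Finite.pi (fun _ : Fin r => L.finite_toSet))
          intro v hv
          simp only [Set.mem_pi, Set.mem_univ, forall_true_left]
          exact fun i => by simpa using hv.2 i
        have hI : (⋂ v ∈ {v : Fin r → ℕ | StrictMono v ∧ ∀ i, v i ∈ L},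
            {x | f (Fin.snoc v x) = limc v}) ∈ U :=
          (Filter.biInter_mem hSfin).2 (fun v _ => hlimc v)
        refine Filter.mem_of_superset hI ?_
        intro x hx v hsm hmem
        simp only [Set.mem_iInter] at hx
        exact hx v ⟨hsm, hmem⟩
    have hne : ∀ L, (bigSet L).Nonempty := fun L => Filter.nonempty_of_mem (hbig L)
    let nextPt : List ℕ → ℕ := fun L => (hne L).choose
    have hnext : ∀ L, nextPt L ∈ bigSet L := fun L => (hne L).choose_spec
    let hist : ℕ → List ℕ := fun k => Nat.rec [] (fun _ L => L ++ [nextPt L]) k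
    let e : ℕ → ℕ := fun k => nextPt (hist k)
    have hist_succ : ∀ k, hist (k+1) = hist k ++ [e k] := fun _ => rfl
    have mem_hist : ∀ k y, y ∈ hist k ↔ ∃ j, j < k ∧ e j = y := by
      intro k
      induction k with
      | zero => intro y; simp [hist]
      | succ k ihk =>
        intro y
        rw [hist_succ, List.mem_append]
        constructor
        · rintro (h | h)
          · obtain ⟨j, hj, rfl⟩ := (ihk y).1 h
            exact ⟨j, by omega, rfl⟩
          · simp only [List.mem_singleton] at h
            exact ⟨k, by omega, h.symm⟩
        · rintro ⟨j, hj, rfl⟩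
          rcases Nat.lt_succ_iff_lt_or_eq.1 hj with h | rfl
          · exact Or.inl ((ihk _).2 ⟨j, h, rfl⟩)
          · exact Or.inr (by simp)
    have e_lt : ∀ j k, j < k → e j < e k := by
      intro j k hjk
      exact (hnext (hist k)).1 (e j) ((mem_hist k (e j)).2 ⟨j, hjk, rfl⟩)
    have e_mono : StrictMono e := fun j k h => e_lt j k h
    have key : ∀ (v : Fin r → ℕ), StrictMono v → ∀ k, (∀ i, v i < k) →
        f (Fin.snoc (e ∘ v) (e k)) = limc (e ∘ v) := by
      intro v hv k hk
      exact (hnext (hist k)).2 (e ∘ v) (e_mono.comp hv)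
        (fun i => (mem_hist k (e (v i))).2 ⟨v i, hk i, rfl⟩)
    obtain ⟨g', c, hg', hg'c⟩ := ih (fun v => limc (e ∘ v))
    refine ⟨e ∘ g', c, e_mono.comp hg', ?_⟩
    intro v hv
    have hw : StrictMono (g' ∘ v) := hg'.comp hv
    have hgoal : (e ∘ g') ∘ v = e ∘ (g' ∘ v) := rfl
    rw [hgoal, ← Fin.snoc_init_self (e ∘ (g' ∘ v))]
    have hinit : Fin.init (e ∘ (g' ∘ v)) = e ∘ (Fin.init (g' ∘ v)) := rfl
    have hlastv : (e ∘ (g' ∘ v)) (Fin.last r) = e ((g' ∘ v) (Fin.last r)) := rfl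
    rw [hinit, hlastv,
      key (Fin.init (g' ∘ v)) (fun i j h => hw (Fin.castSucc_lt_castSucc_iff.2 h))
        ((g' ∘ v) (Fin.last r)) (fun i => hw (Fin.castSucc_lt_last i))]
    have h2 : Fin.init (g' ∘ v) = g' ∘ (Fin.init v) := rfl
    rw [h2]
    exact hg'c (Fin.init v) (fun i j h => hv (Fin.castSucc_lt_castSucc_iff.2 h))



lemma ofFn_getD_of_prefix {σ ρ : List Bool} (h : σ <+: ρ) :
    List.ofFn (fun i : Fin σ.length => ρ.getD i false) = σ := by
  apply List.ext_getElem (by simp)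
  intro i h1 h2
  simp only [List.getElem_ofFn]
  rw [List.getD_eq_getElem _ _ (lt_of_lt_of_le h2 h.length_le)]
  exact (h.getElem h2).symm

theorem raw_array {n m : ℕ} (φ : L.Formula (Fin n ⊕ Fin m)) (t : List Bool → Fin m → M)
    (hcons : ∀ (f : ℕ → Bool) (N : ℕ), ∃ a : Fin n → M, ∀ k ≤ N,
      φ.Realize (Sum.elim a (t (List.ofFn (fun i : Fin k => f i)))))
    (hinc : ∀ ν η : List Bool, ν ++ [false] <+: η →
      ¬ ∃ a : Fin n → M, φ.Realize (Sum.elim a (t η)) ∧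
        φ.Realize (Sum.elim a (t (ν ++ [true]))))
    (Δ : List (Σ i₀ : ℕ, L.Formula (Fin m ⊕ ({j : ℕ // j < i₀} × (Fin n ⊕ (Fin m ⊕ Fin m)))))) :
    ∃ d : ℕ → (Fin n → M) × (Fin m → M) × (Fin m → M),
      (∀ i j, j ≤ i → φ.Realize (Sum.elim (d i).1 (d j).2.1)) ∧
      (∀ i j, i < j → ¬ ∃ x : Fin n → M, φ.Realize (Sum.elim x (d j).2.2) ∧
        φ.Realize (Sum.elim x (d i).2.2)) ∧
      (∀ p ∈ Δ, ∀ (i : ℕ) (w : {j : ℕ // j < p.1} → ℕ), (∀ q, w q < i) →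
        (p.2.Realize (Sum.elim (d i).2.1 (fun q => tripleElim (d (w q.1)) q.2)) ↔
         p.2.Realize (Sum.elim (d i).2.2 (fun q => tripleElim (d (w q.1)) q.2)))) := by
  classical
  haveI hfin : ∀ i₀ : ℕ, Finite {j : ℕ // j < i₀} := fun i₀ =>
    Finite.of_equiv (Fin i₀) ⟨fun k => ⟨k.1, k.2⟩, fun j => ⟨j.1, j.2⟩,
      fun _ => rfl, fun _ => rfl⟩
  -- the one-step lemma
  have step : ∀ (ρ : List Bool) (past : List ((Fin n → M) × (Fin m → M) × (Fin m → M))),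
      ∃ x : (Fin n → M) × (Fin m → M) × (Fin m → M) × List Bool × List Bool,
        ρ <+: x.2.2.2.2 ∧ x.2.2.1 = t (x.2.2.2.2 ++ [true]) ∧
        (x.2.2.2.2 ++ [false]) <+: x.2.2.2.1 ∧ x.2.1 = t x.2.2.2.1 ∧
        (∀ σ, σ <+: x.2.2.2.1 → φ.Realize (Sum.elim x.1 (t σ))) ∧
        (∀ p ∈ Δ, ∀ w : {j : ℕ // j < p.1} → Fin past.length,
          (p.2.Realize (Sum.elim x.2.1
              (fun q => tripleElim (past.get (w q.1)) q.2)) ↔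
           p.2.Realize (Sum.elim x.2.2.1
              (fun q => tripleElim (past.get (w q.1)) q.2)))) := by
    intro ρ past
    -- colors
    set tooth : ℕ → List Bool := fun j => ρ ++ List.replicate j false ++ [true] with htooth
    set col : ℕ → (i : Fin Δ.length) → (({j : ℕ // j < (Δ.get i).1} → Fin past.length) → Bool) :=
      fun j i w => decide ((Δ.get i).2.Realize (Sum.elim (t (tooth j))
        (fun q => tripleElim (past.get (w q.1)) q.2))) with hcol
    obtain ⟨j₁, j₂, hne, heq⟩ := Finite.exists_ne_map_eq_of_infinite col
    -- order them
    obtain ⟨jl, jh, hlt, hceq⟩ : ∃ jl jh, jl < jh ∧ col jl = col jh := by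
      rcases lt_or_gt_of_ne hne with h | h
      · exact ⟨j₁, j₂, h, heq⟩
      · exact ⟨j₂, j₁, h, heq.symm⟩
    set ν : List Bool := ρ ++ List.replicate jl false with hν
    set ρ' : List Bool := tooth jh with hρ'
    obtain ⟨a, ha⟩ := hcons (fun k => ρ'.getD k false) ρ'.length
    refine ⟨⟨a, t ρ', t (ν ++ [true]), ρ', ν⟩, ?_, rfl, ?_, rfl, ?_, ?_⟩
    · exact ⟨List.replicate jl false, rfl⟩
    · -- ν ++ [false] <+: ρ'
      refine ⟨List.replicate (jh - (jl + 1)) false ++ [true], ?_⟩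
      have : List.replicate jh false =
          (List.replicate jl false ++ [false]) ++ List.replicate (jh - (jl + 1)) false := by
        rw [← List.replicate_succ', ← List.replicate_add]
        congr 1
        omega
      simp only [hρ', htooth, hν, this]
      simp [List.append_assoc]
    · intro σ hσ
      have h1 := ha σ.length (by exact hσ.length_le)
      rwa [ofFn_getD_of_prefix hσ] at h1
    · intro p hp w
      obtain ⟨ip, hip, hgp⟩ := List.getElem_of_mem hp
      have hfun : ∀ q : {j : ℕ // j < p.1}, True := fun _ => trivial
      subst hgp
      have := congrFun (congrFun hceq ⟨ip, hip⟩) w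
      simp only [hcol, List.get_eq_getElem, decide_eq_decide] at this
      exact this.symm
  choose stepF hstep1 hstep2 hstep3 hstep4 hstep5 hstep6 using step
  -- iterate
  set St : ℕ → List Bool × List ((Fin n → M) × (Fin m → M) × (Fin m → M)) :=
    fun k => Nat.rec ([], []) (fun _ s =>
      ((stepF s.1 s.2).2.2.2.1, s.2 ++ [⟨(stepF s.1 s.2).1, (stepF s.1 s.2).2.1,
        (stepF s.1 s.2).2.2.1⟩])) k with hSt
  set d : ℕ → (Fin n → M) × (Fin m → M) × (Fin m → M) :=
    fun i => ⟨(stepF (St i).1 (St i).2).1, (stepF (St i).1 (St i).2).2.1,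
      (stepF (St i).1 (St i).2).2.2.1⟩ with hd
  have hSt_succ : ∀ i, St (i + 1) = ((stepF (St i).1 (St i).2).2.2.2.1, (St i).2 ++ [d i]) :=
    fun _ => rfl
  have hlen : ∀ i, (St i).2.length = i := by
    intro i
    induction i with
    | zero => rfl
    | succ i ih => rw [hSt_succ]; simp [ih]
  have hget : ∀ i j (h : j < i) (h' : j < (St i).2.length), (St i).2[j] = d j := by
    intro i
    induction i with
    | zero => omega
    | succ i ih =>
      intro j h h'
      have he : (St (i + 1)).2 = (St i).2 ++ [d i] := by rw [hSt_succ]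
      have h'' : j < ((St i).2 ++ [d i]).length := by rw [← he]; exact h'
      rw [List.getElem_of_eq he h']
      rcases Nat.lt_or_ge j i with hj | hj
      · rw [List.getElem_append_left (by rw [hlen]; exact hj)]
        exact ih j hj _
      · have hji : j = i := by omega
        subst hji
        rw [List.getElem_append_right (by rw [hlen])]
        simp [hlen]
  have hrho_mono : ∀ i, (St i).1 <+: (St (i + 1)).1 := by
    intro i
    have h1 := hstep1 (St i).1 (St i).2
    have h3 := hstep3 (St i).1 (St i).2
    rw [hSt_succ]
    calc (St i).1 <+: (stepF (St i).1 (St i).2).2.2.2.2 := h1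
    _ <+: (stepF (St i).1 (St i).2).2.2.2.2 ++ [false] := ⟨[false], rfl⟩
    _ <+: (stepF (St i).1 (St i).2).2.2.2.1 := h3
  have hrho_chain : ∀ i j, i ≤ j → (St i).1 <+: (St j).1 := by
    intro i j hij
    induction j with
    | zero => cases Nat.le_zero.1 hij; exact List.prefix_refl _
    | succ j ih =>
      rcases Nat.lt_or_ge i (j + 1) with h | h
      · exact (ih (by omega)).trans (hrho_mono j)
      · have : i = j + 1 := by omega
        subst this; exact List.prefix_refl _
  -- c0 i is the node ρ_{i+1}
  have hc0 : ∀ i, (d i).2.1 = t ((St (i + 1)).1) := by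
    intro i
    have := hstep4 (St i).1 (St i).2
    rw [hSt_succ]
    exact this
  refine ⟨d, ?_, ?_, ?_⟩
  · -- consistency
    intro i j hji
    have h5 := hstep5 (St i).1 (St i).2
    rw [hc0 j]
    exact h5 _ (hrho_chain (j + 1) (i + 1) (by omega))
  · -- 2-inconsistency
    intro i j hij hex
    have h2i := hstep2 (St i).1 (St i).2
    have h2j := hstep2 (St j).1 (St j).2
    have hpre : (stepF (St i).1 (St i).2).2.2.2.2 ++ [false] <+:
        ((stepF (St j).1 (St j).2).2.2.2.2 ++ [true]) := by
      calc (stepF (St i).1 (St i).2).2.2.2.2 ++ [false]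
          <+: (St (i + 1)).1 := hstep3 (St i).1 (St i).2
      _ <+: (St j).1 := hrho_chain (i + 1) j hij
      _ <+: (stepF (St j).1 (St j).2).2.2.2.2 := hstep1 (St j).1 (St j).2
      _ <+: (stepF (St j).1 (St j).2).2.2.2.2 ++ [true] := ⟨[true], rfl⟩
    refine hinc _ _ hpre ?_
    obtain ⟨x, hx1, hx2⟩ := hex
    simp only [hd] at hx1 hx2
    exact ⟨x, by rwa [h2j] at hx1, by rwa [h2i] at hx2⟩
  · -- sibling matching
    intro p hp i w hw
    have h6 := hstep6 (St i).1 (St i).2 p hp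
      (fun q => ⟨w q, by rw [hlen]; exact hw q⟩)
    have harg : ∀ q : {j : ℕ // j < p.1} × (Fin n ⊕ (Fin m ⊕ Fin m)),
        tripleElim ((St i).2.get ⟨w q.1, by rw [hlen]; exact hw q.1⟩) q.2 =
        tripleElim (d (w q.1)) q.2 := by
      intro q
      congr 1
      exact hget i (w q.1) (hw q.1) _
    rw [show (fun q : {j : ℕ // j < p.1} × (Fin n ⊕ (Fin m ⊕ Fin m)) =>
        tripleElim ((St i).2.get ⟨w q.1, _⟩) q.2) = fun q => tripleElim (d (w q.1)) q.2
      from funext harg] at h6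
    exact h6



lemma exists_strictMono_extend {r R : ℕ} (hrR : r ≤ R) (s : Fin r → ℕ) (hs : StrictMono s) :
    ∃ v : Fin R → ℕ, StrictMono v ∧ ∀ q : Fin r, v ⟨q.1, lt_of_lt_of_le q.2 hrR⟩ = s q := by
  classical
  by_cases hr : 0 < r
  · set C := s ⟨r - 1, by omega⟩ + 1 with hC
    refine ⟨fun k => if h : k.1 < r then s ⟨k.1, h⟩ else k.1 + C, ?_, ?_⟩
    · intro k k' hkk'
      have hlt : k.1 < k'.1 := hkk'
      by_cases h1 : k.1 < r <;> by_cases h2 : k'.1 < r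
      · simpa [h1, h2] using hs (show (⟨k.1, h1⟩ : Fin r) < ⟨k'.1, h2⟩ from hlt)
      · have hle1 : s ⟨k.1, h1⟩ ≤ s ⟨r - 1, by omega⟩ :=
          hs.monotone (show (⟨k.1, h1⟩ : Fin r) ≤ ⟨r - 1, by omega⟩ by
            simp only [Fin.mk_le_mk]; omega)
        simp only [h1, h2, dif_pos, dif_neg, not_false_iff]
        omega
      · omega
      · simp only [h1, h2, dif_neg, not_false_iff]
        omega
    · intro q
      simp [q.2]
  · refine ⟨fun k => k.1, fun a b h => h, fun q => absurd q.2 (by omega)⟩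


theorem good_array {n m : ℕ} (φ : L.Formula (Fin n ⊕ Fin m)) (t : List Bool → Fin m → M)
    (hcons : ∀ (f : ℕ → Bool) (N : ℕ), ∃ a : Fin n → M, ∀ k ≤ N,
      φ.Realize (Sum.elim a (t (List.ofFn (fun i : Fin k => f i)))))
    (hinc : ∀ ν η : List Bool, ν ++ [false] <+: η →
      ¬ ∃ a : Fin n → M, φ.Realize (Sum.elim a (t η)) ∧
        φ.Realize (Sum.elim a (t (ν ++ [true]))))
    (Δ : List (Σ i₀ : ℕ, L.Formula (Fin m ⊕ ({j : ℕ // j < i₀} × (Fin n ⊕ (Fin m ⊕ Fin m))))))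
    (ΔR : List (Σ r : ℕ, L.Formula (Fin r × (Fin n ⊕ (Fin m ⊕ Fin m))))) :
    ∃ d : ℕ → (Fin n → M) × (Fin m → M) × (Fin m → M),
      (∀ i j, j ≤ i → φ.Realize (Sum.elim (d i).1 (d j).2.1)) ∧
      (∀ i j, i < j → ¬ ∃ x : Fin n → M, φ.Realize (Sum.elim x (d j).2.2) ∧
        φ.Realize (Sum.elim x (d i).2.2)) ∧
      (∀ p ∈ Δ,
        (p.2.Realize (Sum.elim (d p.1).2.1 (fun q => tripleElim (d q.1.1) q.2)) ↔
         p.2.Realize (Sum.elim (d p.1).2.2 (fun q => tripleElim (d q.1.1) q.2)))) ∧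
      (∀ p ∈ ΔR, ∀ sv tv : Fin p.1 → ℕ, StrictMono sv → StrictMono tv →
        (p.2.Realize (fun q => tripleElim (d (sv q.1)) q.2) ↔
         p.2.Realize (fun q => tripleElim (d (tv q.1)) q.2))) := by
  classical
  obtain ⟨d₀, hB, hC, hD⟩ := raw_array φ t hcons hinc Δ
  set R := (ΔR.map Sigma.fst).foldr max 0 with hR
  have hle : ∀ p ∈ ΔR, p.1 ≤ R := fun p hp =>
    List.le_max_of_le (List.mem_map_of_mem (f := Sigma.fst) hp) le_rfl
  set f : (Fin R → ℕ) → ((i : Fin ΔR.length) → ((Fin (ΔR.get i).1 → Fin R) → Bool)) :=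
    fun v i u => decide ((ΔR.get i).2.Realize
      (fun q => tripleElim (d₀ (v (u q.1))) q.2)) with hf
  obtain ⟨g, c, hg, hhom⟩ := ramsey R f
  refine ⟨fun i => d₀ (g i), fun i j hji => hB _ _ (hg.monotone hji), ?_, ?_, ?_⟩
  · intro i j hij hex
    exact hC (g i) (g j) (hg hij) hex
  · intro p hp
    exact hD p hp (g p.1) (fun q => g q.1) (fun q => hg q.2)
  · intro p hp sv tv hsv htv
    obtain ⟨ip, hip, hgp⟩ := List.getElem_of_mem hp
    obtain ⟨vs, hvs, hvseq⟩ := exists_strictMono_extend (hle _ hp) sv hsv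
    obtain ⟨vt, hvt, hvteq⟩ := exists_strictMono_extend (hle _ hp) tv htv
    subst hgp
    set u : Fin (ΔR[ip]).1 → Fin R := fun q => ⟨q.1, lt_of_lt_of_le q.2 (hle _ hp)⟩ with hu
    have e1 := congrFun (congrFun ((hhom vs hvs).trans (hhom vt hvt).symm) ⟨ip, hip⟩)
    have e2 := e1 u
    simp only [hf, Function.comp_apply, decide_eq_decide] at e2
    have hs' : ∀ (vv : Fin R → ℕ) (sw : Fin (ΔR[ip]).1 → ℕ),
        (∀ q : Fin (ΔR[ip]).1, vv ⟨q.1, lt_of_lt_of_le q.2 (hle _ hp)⟩ = sw q) →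
        (fun q : Fin ((ΔR.get ⟨ip, hip⟩)).1 × (Fin n ⊕ (Fin m ⊕ Fin m)) =>
          tripleElim (d₀ (g (vv (u q.1)))) q.2) =
        (fun q => tripleElim (d₀ (g (sw q.1))) q.2) := by
      intro vv sw hvv
      funext q
      rw [hu]
      simp only [List.get_eq_getElem]
      rw [hvv q.1]
    rw [hs' vs sv hvseq, hs' vt tv hvteq] at e2
    exact e2

def pairFormula {n m : ℕ} (φ : L.Formula (Fin n ⊕ Fin m)) :
    L.Formula (Fin m ⊕ Fin m) :=
  (BoundedFormula.relabel
    (Sum.elim (fun k : Fin n => Sum.inr k)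
      (fun y : Fin m ⊕ Fin m => Sum.inl y) :
      (Fin n ⊕ (Fin m ⊕ Fin m)) → ((Fin m ⊕ Fin m) ⊕ Fin n))
    (((φ.relabel (Sum.map id Sum.inl)) ⊓ (φ.relabel (Sum.map id Sum.inr)) :
      L.Formula (Fin n ⊕ (Fin m ⊕ Fin m))) : L.BoundedFormula (Fin n ⊕ (Fin m ⊕ Fin m)) 0)).exs

lemma realize_bf0 {β : Type*} (θ : L.BoundedFormula β 0) (w : β → M) (xs0 : Fin 0 → M) :
    θ.Realize w xs0 ↔ Formula.Realize θ w := by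
  unfold Formula.Realize
  exact iff_of_eq (congrArg (θ.Realize w) (funext fun i => i.elim0))

lemma realize_pairFormula {n m : ℕ} (φ : L.Formula (Fin n ⊕ Fin m))
    (v : (Fin m ⊕ Fin m) → M) :
    (pairFormula φ).Realize v ↔ ∃ x : Fin n → M,
      φ.Realize (Sum.elim x (v ∘ Sum.inl)) ∧ φ.Realize (Sum.elim x (v ∘ Sum.inr)) := by
  rw [pairFormula, BoundedFormula.realize_exs]
  constructor
  · rintro ⟨xs, hxs⟩
    rw [BoundedFormula.realize_relabel] at hxs
    refine ⟨xs ∘ Fin.castAdd 0, ?_⟩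
    rw [realize_bf0, Formula.realize_inf, Formula.realize_relabel, Formula.realize_relabel] at hxs
    obtain ⟨h1, h2⟩ := hxs
    constructor
    · refine (iff_of_eq (congrArg _ ?_)).1 h1
      funext z
      cases z with
      | inl k => rfl
      | inr k => rfl
    · refine (iff_of_eq (congrArg _ ?_)).1 h2
      funext z
      cases z with
      | inl k => rfl
      | inr k => rfl
  · rintro ⟨x, h1, h2⟩
    refine ⟨x ∘ Fin.castAdd 0, ?_⟩
    rw [BoundedFormula.realize_relabel]
    rw [realize_bf0, Formula.realize_inf, Formula.realize_relabel, Formula.realize_relabel]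
    constructor
    · refine (iff_of_eq (congrArg _ ?_)).1 h1
      funext z
      cases z with
      | inl k => rfl
      | inr k => rfl
    · refine (iff_of_eq (congrArg _ ?_)).1 h2
      funext z
      cases z with
      | inl k => rfl
      | inr k => rfl





/-- big variable set for the saturation argument -/
abbrev BigVar (n m : ℕ) : Type w := ULift.{w} (ℕ × (Fin n ⊕ (Fin m ⊕ Fin m)))

section Formulas

variable (M) {n m : ℕ}

def F1 {r : ℕ} (ψ : L.Formula (Fin r × (Fin n ⊕ (Fin m ⊕ Fin m)))) (s t : Fin r → ℕ) :
    L.Formula (BigVar.{w} n m ⊕ ↥(∅ : Set M)) :=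
  (ψ.relabel (fun q => Sum.inl ⟨(s q.1, q.2)⟩)).iff
    (ψ.relabel (fun q => Sum.inl ⟨(t q.1, q.2)⟩))

def F2 (φ : L.Formula (Fin n ⊕ Fin m)) (i j : ℕ) :
    L.Formula (BigVar.{w} n m ⊕ ↥(∅ : Set M)) :=
  φ.relabel (Sum.elim (fun k : Fin n => Sum.inl ⟨(i, Sum.inl k)⟩)
    (fun k : Fin m => Sum.inl ⟨(j, Sum.inr (Sum.inl k))⟩))

def F3 (φ : L.Formula (Fin n ⊕ Fin m)) (i j : ℕ) :
    L.Formula (BigVar.{w} n m ⊕ ↥(∅ : Set M)) :=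
  ((pairFormula φ).relabel (Sum.elim (fun k : Fin m => Sum.inl ⟨(i, Sum.inr (Sum.inr k))⟩)
    (fun k : Fin m => Sum.inl ⟨(j, Sum.inr (Sum.inr k))⟩))).not

def F4 (i : ℕ) (ψ : L.Formula (Fin m ⊕ ({j : ℕ // j < i} × (Fin n ⊕ (Fin m ⊕ Fin m))))) :
    L.Formula (BigVar.{w} n m ⊕ ↥(∅ : Set M)) :=
  (ψ.relabel (Sum.elim (fun k : Fin m => Sum.inl ⟨(i, Sum.inr (Sum.inl k))⟩)
    (fun q => Sum.inl ⟨(q.1.1, q.2)⟩))).iff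
  (ψ.relabel (Sum.elim (fun k : Fin m => Sum.inl ⟨(i, Sum.inr (Sum.inr k))⟩)
    (fun q => Sum.inl ⟨(q.1.1, q.2)⟩)))

end Formulas

section RealizeLemmas

variable {n m : ℕ} (bγ : BigVar.{w} n m → M)

lemma realize_F1 {r : ℕ} (ψ : L.Formula (Fin r × (Fin n ⊕ (Fin m ⊕ Fin m))))
    (s t : Fin r → ℕ) :
    (F1 M ψ s t).Realize (Sum.elim bγ Subtype.val) ↔
      ((ψ.Realize fun q => bγ ⟨(s q.1, q.2)⟩) ↔ (ψ.Realize fun q => bγ ⟨(t q.1, q.2)⟩)) := by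
  rw [F1, Formula.realize_iff, Formula.realize_relabel, Formula.realize_relabel]
  exact Iff.rfl

lemma realize_F2 (φ : L.Formula (Fin n ⊕ Fin m)) (i j : ℕ) :
    (F2 M φ i j).Realize (Sum.elim bγ Subtype.val) ↔
      φ.Realize (Sum.elim (fun k => bγ ⟨(i, Sum.inl k)⟩)
        (fun k => bγ ⟨(j, Sum.inr (Sum.inl k))⟩)) := by
  rw [F2, Formula.realize_relabel]
  exact iff_of_eq (congrArg _ (funext fun z => by cases z <;> rfl))

lemma realize_F3 (φ : L.Formula (Fin n ⊕ Fin m)) (i j : ℕ) :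
    (F3 M φ i j).Realize (Sum.elim bγ Subtype.val) ↔
      ¬ ∃ x : Fin n → M, φ.Realize (Sum.elim x (fun k => bγ ⟨(i, Sum.inr (Sum.inr k))⟩)) ∧
        φ.Realize (Sum.elim x (fun k => bγ ⟨(j, Sum.inr (Sum.inr k))⟩)) := by
  rw [F3, Formula.realize_not, Formula.realize_relabel, realize_pairFormula]
  exact Iff.rfl

lemma realize_F4 (i : ℕ) (ψ : L.Formula (Fin m ⊕ ({j : ℕ // j < i} × (Fin n ⊕ (Fin m ⊕ Fin m))))) :
    (F4 M i ψ).Realize (Sum.elim bγ Subtype.val) ↔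
      ((ψ.Realize (Sum.elim (fun k => bγ ⟨(i, Sum.inr (Sum.inl k))⟩)
          (fun q => bγ ⟨(q.1.1, q.2)⟩))) ↔
       (ψ.Realize (Sum.elim (fun k => bγ ⟨(i, Sum.inr (Sum.inr k))⟩)
          (fun q => bγ ⟨(q.1.1, q.2)⟩)))) := by
  rw [F4, Formula.realize_iff, Formula.realize_relabel, Formula.realize_relabel]
  exact iff_of_eq (congrArg₂ Iff
    (congrArg _ (funext fun z => by cases z <;> rfl))
    (congrArg _ (funext fun z => by cases z <;> rfl)))

end RealizeLemmas

abbrev IdxT (L : FirstOrder.Language.{u, v}) (n m : ℕ) :=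
  (Σ r : ℕ, (L.Formula (Fin r × (Fin n ⊕ (Fin m ⊕ Fin m)))) ×
    {f : Fin r → ℕ // StrictMono f} × {f : Fin r → ℕ // StrictMono f}) ⊕
  ((ℕ × ℕ) ⊕ ((ℕ × ℕ) ⊕
    (Σ i : ℕ, L.Formula (Fin m ⊕ ({j : ℕ // j < i} × (Fin n ⊕ (Fin m ⊕ Fin m)))))))

open Classical in
noncomputable def FF (M : Type w) [L.Structure M] {n m : ℕ} (φ : L.Formula (Fin n ⊕ Fin m)) :
    IdxT L n m → L.Formula (BigVar.{w} n m ⊕ ↥(∅ : Set M)) :=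
  fun idx => match idx with
  | Sum.inl ⟨_, ψ, s, t⟩ => F1 M ψ s.1 t.1
  | Sum.inr (Sum.inl p) => if p.2 ≤ p.1 then F2 M φ p.1 p.2 else ⊤
  | Sum.inr (Sum.inr (Sum.inl p)) => if p.1 ≠ p.2 then F3 M φ p.1 p.2 else ⊤
  | Sum.inr (Sum.inr (Sum.inr ⟨i, ψ⟩)) => F4 M i ψ




lemma finsat {n m : ℕ} (φ : L.Formula (Fin n ⊕ Fin m)) (t : List Bool → Fin m → M)
    (hcons : ∀ (f : ℕ → Bool) (N : ℕ), ∃ a : Fin n → M, ∀ k ≤ N,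
      φ.Realize (Sum.elim a (t (List.ofFn (fun i : Fin k => f i)))))
    (hinc : ∀ ν η : List Bool, ν ++ [false] <+: η →
      ¬ ∃ a : Fin n → M, φ.Realize (Sum.elim a (t η)) ∧
        φ.Realize (Sum.elim a (t (ν ++ [true])))) :
    ∀ s : Finset (L.Formula (BigVar.{w} n m ⊕ ↥(∅ : Set M))), ↑s ⊆ Set.range (FF M φ) →
    ∃ bb : BigVar.{w} n m → M, ∀ ψ ∈ s, ψ.Realize (Sum.elim bb Subtype.val) := by
  intro s hs
  classical
  have hex : ∀ x ∈ s, ∃ idx : IdxT L n m, FF M φ idx = x := fun x hx => hs hx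
  choose pick hpick using hex
  set IL : List (IdxT L n m) := s.attach.toList.map (fun x => pick x.1 x.2) with hIL
  set Δ : List (Σ i₀ : ℕ,
      L.Formula (Fin m ⊕ ({j : ℕ // j < i₀} × (Fin n ⊕ (Fin m ⊕ Fin m))))) :=
    IL.filterMap (fun idx => match idx with
      | Sum.inr (Sum.inr (Sum.inr p)) => some p
      | _ => none) with hΔ
  set ΔR : List (Σ r : ℕ, L.Formula (Fin r × (Fin n ⊕ (Fin m ⊕ Fin m)))) :=
    IL.filterMap (fun idx => match idx with
      | Sum.inl ⟨r, ψ, _, _⟩ => some ⟨r, ψ⟩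
      | _ => none) with hΔR
  obtain ⟨d, hgB, hgC, hgD, hgE⟩ := good_array φ t hcons hinc Δ ΔR
  set bb : BigVar.{w} n m → M := fun z => tripleElim (d z.down.1) z.down.2 with hbb
  refine ⟨bb, ?_⟩
  have hall : ∀ idx ∈ IL, (FF M φ idx).Realize (Sum.elim bb Subtype.val) := by
    intro idx hidx
    rcases idx with ⟨r, ψ₁, ⟨s₁, hs₁⟩, ⟨t₁, ht₁⟩⟩ | (p | (p | ⟨i, ψ₄⟩))
    · rw [show FF M φ (Sum.inl ⟨r, ψ₁, ⟨s₁, hs₁⟩, ⟨t₁, ht₁⟩⟩) = F1 M ψ₁ s₁ t₁ from rfl,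
        realize_F1]
      exact hgE ⟨r, ψ₁⟩ (List.mem_filterMap.2 ⟨_, hidx, rfl⟩) s₁ t₁ hs₁ ht₁
    · rw [show FF M φ (Sum.inr (Sum.inl p)) = if p.2 ≤ p.1 then F2 M φ p.1 p.2 else ⊤ from rfl]
      split_ifs with hle
      · rw [realize_F2]
        exact hgB p.1 p.2 hle
      · exact Formula.realize_top.2 trivial
    · rw [show FF M φ (Sum.inr (Sum.inr (Sum.inl p))) =
        if p.1 ≠ p.2 then F3 M φ p.1 p.2 else ⊤ from rfl]
      split_ifs with hne
      · rw [realize_F3]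
        rintro ⟨x, h1, h2⟩
        rcases lt_or_gt_of_ne hne with h | h
        · exact hgC p.1 p.2 h ⟨x, h2, h1⟩
        · exact hgC p.2 p.1 h ⟨x, h1, h2⟩
      · exact Formula.realize_top.2 trivial
    · rw [show FF M φ (Sum.inr (Sum.inr (Sum.inr ⟨i, ψ₄⟩))) = F4 M i ψ₄ from rfl, realize_F4]
      exact hgD ⟨i, ψ₄⟩ (List.mem_filterMap.2 ⟨_, hidx, rfl⟩)
  intro ψ hψ
  rw [← hpick ψ hψ]
  exact hall _ (List.mem_map.2 ⟨⟨ψ, hψ⟩, Finset.mem_toList.2 (s.mem_attach _), rfl⟩)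



end SOP1Aux

/-- from SOP₁, one obtains a formula `φ` and an indiscernible sequence
`⟨(aᵢ, c_{i,0}, c_{i,1})⟩` with `aᵢ ⊨ {φ(x;c_{j,0}) : j ≤ i}`, `{φ(x;c_{i,1})}`
2-inconsistent, and `c_{i,0} ≡_{a_{<i} c_{<i,0} c_{<i,1}} c_{i,1}`. -/
theorem sop1_good_indiscernible (h : HasSOP1 L M)
    (κ : Cardinal.{w}) (hκ : ℵ₀ < κ) (hsat : IsSaturatedIn L M κ) :
    ∃ (n m : ℕ) (φ : L.Formula (Fin n ⊕ Fin m))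
      (a : ℕ → Fin n → M) (c0 c1 : ℕ → Fin m → M),
      Indiscernible (L := L) (∅ : Set M)
        (fun i : ℕ => (Sum.elim (a i) (Sum.elim (c0 i) (c1 i)) :
          Fin n ⊕ (Fin m ⊕ Fin m) → M)) ∧
      (∀ i j : ℕ, j ≤ i → φ.Realize (Sum.elim (a i) (c0 j))) ∧
      (∀ i j : ℕ, i ≠ j → ¬ ∃ x : Fin n → M,
        φ.Realize (Sum.elim x (c1 i)) ∧ φ.Realize (Sum.elim x (c1 j))) ∧
      (∀ i : ℕ, EqTp (L := L)
        (⋃ j ∈ {j : ℕ | j < i},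
          (Set.range (a j) ∪ Set.range (c0 j) ∪ Set.range (c1 j)))
        (c0 i) (c1 i)) := by
  classical
  obtain ⟨n, m, φ, t, hcons, hinc⟩ := h
  refine ⟨n, m, φ, ?_⟩
  have hγ : #(BigVar.{w} n m) < κ := lt_of_le_of_lt Cardinal.mk_le_aleph0 hκ
  have hA : #(↥(∅ : Set M)) < κ := by
    rw [Cardinal.mk_emptyCollection]
    exact lt_trans Cardinal.aleph0_pos hκ
  obtain ⟨bγ, hbγ⟩ := hsat (BigVar.{w} n m) ∅ hγ hA (Set.range (FF M φ))
    (finsat φ t hcons hinc)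
  refine ⟨(fun i k => bγ ⟨(i, Sum.inl k)⟩), (fun i k => bγ ⟨(i, Sum.inr (Sum.inl k))⟩),
    (fun i k => bγ ⟨(i, Sum.inr (Sum.inr k))⟩), ?_, ?_, ?_, ?_⟩
  · -- (1) indiscernibility
    intro n' sv tv hsv htv φ'
    set ψ : L.Formula (Fin n' × (Fin n ⊕ (Fin m ⊕ Fin m))) :=
      φ'.relabel (Sum.elim id (fun e : ↥(∅ : Set M) =>
        (False.elim (Set.notMem_empty e.1 e.2) : Fin n' × (Fin n ⊕ (Fin m ⊕ Fin m))))) with hψ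
    have hr := hbγ (FF M φ (Sum.inl ⟨n', ψ, ⟨sv, hsv⟩, ⟨tv, htv⟩⟩))
      (Set.mem_range_self _)
    rw [show FF M φ (Sum.inl ⟨n', ψ, ⟨sv, hsv⟩, ⟨tv, htv⟩⟩) = F1 M ψ sv tv from rfl,
      realize_F1] at hr
    have hconv : ∀ u : Fin n' → ℕ,
        ((ψ.Realize fun q => bγ ⟨(u q.1, q.2)⟩) ↔ RealizeOver (∅ : Set M) φ'
          (fun p : Fin n' × (Fin n ⊕ (Fin m ⊕ Fin m)) =>
            Sum.elim (fun k => bγ ⟨(u p.1, Sum.inl k)⟩)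
              (Sum.elim (fun k => bγ ⟨(u p.1, Sum.inr (Sum.inl k))⟩)
                (fun k => bγ ⟨(u p.1, Sum.inr (Sum.inr k))⟩)) p.2)) := by
      intro u
      rw [hψ, FirstOrder.Language.Formula.realize_relabel, RealizeOver]
      refine iff_of_eq (congrArg _ (funext fun z => ?_))
      rcases z with q | e
      · rcases q with ⟨q1, k | (k | k)⟩ <;> rfl
      · exact (Set.notMem_empty e.1 e.2).elim
    exact ((hconv sv).symm.trans hr).trans (hconv tv)
  · -- (2) consistency
    intro i j hji
    have hr := hbγ (FF M φ (Sum.inr (Sum.inl (i, j)))) (Set.mem_range_self _)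
    rw [show FF M φ (Sum.inr (Sum.inl (i, j))) = if j ≤ i then F2 M φ i j else ⊤ from rfl,
      if_pos hji, realize_F2] at hr
    exact hr
  · -- (3) 2-inconsistency
    intro i j hij
    have hr := hbγ (FF M φ (Sum.inr (Sum.inr (Sum.inl (i, j))))) (Set.mem_range_self _)
    rw [show FF M φ (Sum.inr (Sum.inr (Sum.inl (i, j)))) =
      if i ≠ j then F3 M φ i j else ⊤ from rfl, if_pos hij, realize_F3] at hr
    exact hr
  · -- (4) same type over the initial segment
    intro i φ'
    have hchoice : ∀ p : ↥(⋃ j ∈ {j : ℕ | j < i},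
        (Set.range (fun k => bγ ⟨(j, Sum.inl k)⟩) ∪
          Set.range (fun k => bγ ⟨(j, Sum.inr (Sum.inl k))⟩) ∪
          Set.range (fun k => bγ ⟨(j, Sum.inr (Sum.inr k))⟩))),
        ∃ q : {j : ℕ // j < i} × (Fin n ⊕ (Fin m ⊕ Fin m)),
        bγ ⟨(q.1.1, q.2)⟩ = p.1 := by
      intro p
      have hp := p.2
      simp only [Set.mem_iUnion, Set.mem_setOf_eq, Set.mem_union, Set.mem_range] at hp
      obtain ⟨j, hj, hmem⟩ := hp
      rcases hmem with (⟨k, hk⟩ | ⟨k, hk⟩) | ⟨k, hk⟩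
      · exact ⟨(⟨j, hj⟩, Sum.inl k), hk⟩
      · exact ⟨(⟨j, hj⟩, Sum.inr (Sum.inl k)), hk⟩
      · exact ⟨(⟨j, hj⟩, Sum.inr (Sum.inr k)), hk⟩
    choose gch hgch using hchoice
    set ψ : L.Formula (Fin m ⊕ ({j : ℕ // j < i} × (Fin n ⊕ (Fin m ⊕ Fin m)))) :=
      φ'.relabel (Sum.map id gch) with hψ
    have hr := hbγ (FF M φ (Sum.inr (Sum.inr (Sum.inr ⟨i, ψ⟩)))) (Set.mem_range_self _)
    rw [show FF M φ (Sum.inr (Sum.inr (Sum.inr ⟨i, ψ⟩))) = F4 M i ψ from rfl,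
      realize_F4] at hr
    have hconv : ∀ cc : Fin m → M,
        ((ψ.Realize (Sum.elim cc
          (fun q : {j : ℕ // j < i} × (Fin n ⊕ (Fin m ⊕ Fin m)) => bγ ⟨(q.1.1, q.2)⟩))) ↔
          RealizeOver _ φ' cc) := by
      intro cc
      rw [hψ, FirstOrder.Language.Formula.realize_relabel, RealizeOver]
      refine iff_of_eq (congrArg _ (funext fun z => ?_))
      rcases z with k | p
      · rfl
      · exact hgch p
    exact ((hconv _).symm.trans hr).trans (hconv _)


end KimPaper
end
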